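/- If-direction of Theorem 3(A) (pseudo-efficient M-estimation of joint quantile and Expected Shortfall models): In the quantile–ES block setup, assume q₁ = q₂ and V_q = V_e =: V ℙ-a.s. (equal model gradients), and suppose there exist constants c₁, c₂, c₃ > 0 and c₄, c₅ ∈ ℝ with c₄ + c₃/(α c₁ c₂) > 0 such that, ℙ-a.s., v = c₁ (q_v − e_v)², f = c₂ / (q_v − e_v), φ'' = c₃ / v, g' = c₄ f + c₅, and φ' = (c₃/(c₁ c₂)) f − α c₅ (conditions (20)–(24) of the paper). Then, with a' := g' + φ'/α = (c₄ + c₃/(α c₁ c₂)) f, there exists a deterministic invertible matrix C ∈ ℝ^{2q₁×2q₁} such that A = C Dᵀ S⁻¹ ℙ-a.s. -/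

import Mathlib

open MeasureTheory Matrix

/-- The matrix `D` of the quantile–ES block setup: first row `(f V_qᵀ, 0)`,
second row `(0, V_eᵀ)`. -/
def qesD {q₁ q₂ : ℕ} (f : ℝ) (Vq : Fin q₁ → ℝ) (Ve : Fin q₂ → ℝ) :
    Matrix (Fin 2) (Fin q₁ ⊕ Fin q₂) ℝ :=
  Matrix.of fun i j =>
    Sum.elim (fun j₁ => if i = 0 then f * Vq j₁ else 0)
      (fun j₂ => if i = 1 then Ve j₂ else 0) j

/-- The M-estimator instrument matrix `A` of the quantile–ES block setup:
first column `(a' V_q, 0)ᵀ`, second column `(0, φ'' V_e)ᵀ`. -/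
def qesA {q₁ q₂ : ℕ} (a' phi'' : ℝ) (Vq : Fin q₁ → ℝ) (Ve : Fin q₂ → ℝ) :
    Matrix (Fin q₁ ⊕ Fin q₂) (Fin 2) ℝ :=
  Matrix.of fun i j =>
    Sum.elim (fun i₁ => if j = 0 then a' * Vq i₁ else 0)
      (fun i₂ => if j = 1 then phi'' * Ve i₂ else 0) i

/-- The conditional second-moment matrix `S` of the quantile–ES block setup. -/
noncomputable def qesS (α qv ev v : ℝ) : Matrix (Fin 2) (Fin 2) ℝ :=
  !![α * (1 - α), (1 - α) * (qv - ev);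
     (1 - α) * (qv - ev), v / α + (1 - α) * (qv - ev) ^ 2 / α]

/-- If-direction of Theorem 3(A): under equal model gradients and the
conditions (20)–(24) of the paper, there exists a deterministic invertible matrix `C`
such that the M-estimator instrument matrix satisfies `A = C Dᵀ S⁻¹` ℙ-a.s.,
where the first column of `A` is built from `a' = g' + φ'/α`. -/
theorem qes_pseudo_efficient_attains
    {Ω : Type*} [MeasureSpace Ω] [IsProbabilityMeasure (volume : Measure Ω)]
    {q₁ : ℕ} (hq₁ : 1 ≤ q₁)
    {α : ℝ} (hα : α ∈ Set.Ioo (0 : ℝ) 1)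
    (Vq Ve : Ω → Fin q₁ → ℝ) (f v qv ev g' phi' phi'' : Ω → ℝ)
    (hVqmeas : Measurable Vq) (hVemeas : Measurable Ve)
    (hfmeas : Measurable f) (hvmeas : Measurable v)
    (hqvmeas : Measurable qv) (hevmeas : Measurable ev)
    (hg'meas : Measurable g') (hphi'meas : Measurable phi')
    (hphi''meas : Measurable phi'')
    (hfpos : ∀ᵐ ω, 0 < f ω) (hvpos : ∀ᵐ ω, 0 < v ω)
    (hqe : ∀ᵐ ω, ev ω < qv ω)
    (hVeq : ∀ᵐ ω, Vq ω = Ve ω)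
    {c₁ c₂ c₃ : ℝ} {c₄ c₅ : ℝ} (hc₁ : 0 < c₁) (hc₂ : 0 < c₂) (hc₃ : 0 < c₃)
    (hc₄ : 0 < c₄ + c₃ / (α * c₁ * c₂))
    (h20 : ∀ᵐ ω, v ω = c₁ * (qv ω - ev ω) ^ 2)
    (h21 : ∀ᵐ ω, f ω = c₂ / (qv ω - ev ω))
    (h22 : ∀ᵐ ω, phi'' ω = c₃ / v ω)
    (h23 : ∀ᵐ ω, g' ω = c₄ * f ω + c₅)
    (h24 : ∀ᵐ ω, phi' ω = (c₃ / (c₁ * c₂)) * f ω - α * c₅) :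
    ∃ C : Matrix (Fin q₁ ⊕ Fin q₁) (Fin q₁ ⊕ Fin q₁) ℝ, IsUnit C.det ∧
      ∀ᵐ ω, qesA (g' ω + phi' ω / α) (phi'' ω) (Vq ω) (Ve ω)
        = C * (qesD (f ω) (Vq ω) (Ve ω))ᵀ * (qesS α (qv ω) (ev ω) (v ω))⁻¹ := by

  obtain ⟨hα0, hα1⟩ := hα
  set K : ℝ := c₄ + c₃ / (α * c₁ * c₂) with hK
  set a : ℝ := K * α * (1 - α) with ha
  set b : ℝ := K * (1 - α) * c₂ with hb
  set c : ℝ := c₃ * (1 - α) / (c₁ * c₂) with hc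
  set e : ℝ := c₃ * (c₁ + 1 - α) / (α * c₁) with he
  set Δ : ℝ := a * e - b * c with hΔ
  have h1α : (0:ℝ) < 1 - α := by linarith
  have hΔval : Δ = K * (1 - α) * c₃ := by
    rw [hΔ, ha, hb, hc, he]
    field_simp
    ring
  have hΔne : Δ ≠ 0 := by
    rw [hΔval]; positivity
  set C : Matrix (Fin q₁ ⊕ Fin q₁) (Fin q₁ ⊕ Fin q₁) ℝ :=
    Matrix.fromBlocks (a • 1) (b • 1) (c • 1) (e • 1) with hC
  refine ⟨C, ?_, ?_⟩
  · apply Matrix.isUnit_det_of_right_inverse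
      (B := Matrix.fromBlocks ((e/Δ) • 1) ((-b/Δ) • 1) ((-c/Δ) • 1) ((a/Δ) • 1))
    rw [hC, Matrix.fromBlocks_multiply]
    have h11 : a • (1 : Matrix (Fin q₁) (Fin q₁) ℝ) * (e/Δ) • 1
        + b • (1 : Matrix (Fin q₁) (Fin q₁) ℝ) * (-c/Δ) • 1 = 1 := by
      simp only [Matrix.smul_mul, Matrix.mul_smul, Matrix.one_mul, smul_smul, ← add_smul]
      rw [show e/Δ * a + -c/Δ * b = 1 by field_simp [hΔ]; ring, one_smul]
    have h12 : a • (1 : Matrix (Fin q₁) (Fin q₁) ℝ) * (-b/Δ) • 1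
        + b • (1 : Matrix (Fin q₁) (Fin q₁) ℝ) * (a/Δ) • 1 = 0 := by
      simp only [Matrix.smul_mul, Matrix.mul_smul, Matrix.one_mul, smul_smul, ← add_smul]
      rw [show -b/Δ * a + a/Δ * b = 0 by field_simp; ring, zero_smul]
    have h21 : c • (1 : Matrix (Fin q₁) (Fin q₁) ℝ) * (e/Δ) • 1
        + e • (1 : Matrix (Fin q₁) (Fin q₁) ℝ) * (-c/Δ) • 1 = 0 := by
      simp only [Matrix.smul_mul, Matrix.mul_smul, Matrix.one_mul, smul_smul, ← add_smul]
      rw [show e/Δ * c + -c/Δ * e = 0 by field_simp; ring, zero_smul]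
    have h22 : c • (1 : Matrix (Fin q₁) (Fin q₁) ℝ) * (-b/Δ) • 1
        + e • (1 : Matrix (Fin q₁) (Fin q₁) ℝ) * (a/Δ) • 1 = 1 := by
      simp only [Matrix.smul_mul, Matrix.mul_smul, Matrix.one_mul, smul_smul, ← add_smul]
      rw [show -b/Δ * c + a/Δ * e = 1 by field_simp [hΔ]; ring, one_smul]
    rw [h11, h12, h21, h22, Matrix.fromBlocks_one]
  · filter_upwards [hfpos, hvpos, hqe, hVeq, h20, h21, h22, h23, h24] with ω
      hfp hvp hqev hVE e20 e21 e22 e23 e24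
    set d : ℝ := qv ω - ev ω with hd
    have hdpos : 0 < d := by simpa [hd] using sub_pos.mpr hqev
    have hdne : d ≠ 0 := ne_of_gt hdpos
    have hvne : v ω ≠ 0 := ne_of_gt hvp
    -- determinant of S
    have hSdet : (qesS α (qv ω) (ev ω) (v ω)).det = (1 - α) * v ω := by
      rw [qesS, Matrix.det_fin_two_of]
      field_simp
      ring
    have hSunit : IsUnit (qesS α (qv ω) (ev ω) (v ω)).det := by
      rw [hSdet]
      exact (mul_pos h1α hvp).ne'.isUnit
    -- key multiplicative identity
    have key : qesA (g' ω + phi' ω / α) (phi'' ω) (Vq ω) (Ve ω)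
        * qesS α (qv ω) (ev ω) (v ω) = C * (qesD (f ω) (Vq ω) (Ve ω))ᵀ := by
      have ha' : g' ω + phi' ω / α = K * f ω := by
        rw [e23, e24, hK]
        field_simp
        ring
      have hdne2 : qv ω - ev ω ≠ 0 := sub_ne_zero.mpr (ne_of_gt hqev)
      rw [ha', e22, e20, e21, hVE]
      ext i j
      rcases i with i | i <;> fin_cases j <;>
        simp only [Matrix.mul_apply, Fin.sum_univ_two, Fintype.sum_sum_type, hC,
          Matrix.fromBlocks_apply₁₁, Matrix.fromBlocks_apply₁₂,
          Matrix.fromBlocks_apply₂₁, Matrix.fromBlocks_apply₂₂,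
          Matrix.smul_apply, Matrix.one_apply, smul_eq_mul, Matrix.transpose_apply,
          qesA, qesD, qesS, Matrix.of_apply, Sum.elim_inl, Sum.elim_inr,
          Matrix.cons_val', Matrix.cons_val_zero, Matrix.cons_val_one,
          Matrix.head_cons, Matrix.head_fin_const, Matrix.empty_val',
          Matrix.cons_val_fin_one, mul_ite, ite_mul, mul_zero, zero_mul, mul_one,
          Finset.sum_ite_eq, Finset.mem_univ, if_true, add_zero, zero_add,
          Fin.zero_eta, Fin.mk_one, Fin.isValue,
          show (0:Fin 2) ≠ 1 by decide, show (1:Fin 2) ≠ 0 by decide, if_false] <;>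
        simp only [ha, hb, hc, he, hK, hd, Finset.sum_const_zero, mul_zero, add_zero] <;>
        field_simp [ha, hb, hc, he, hK, hdne2, ne_of_gt hα0, ne_of_gt hc₁,
          ne_of_gt hc₂] <;>
        ring
    calc qesA (g' ω + phi' ω / α) (phi'' ω) (Vq ω) (Ve ω)
        = qesA (g' ω + phi' ω / α) (phi'' ω) (Vq ω) (Ve ω)
          * (qesS α (qv ω) (ev ω) (v ω) * (qesS α (qv ω) (ev ω) (v ω))⁻¹) := by
          rw [Matrix.mul_nonsing_inv _ hSunit, Matrix.mul_one]
      _ = C * (qesD (f ω) (Vq ω) (Ve ω))ᵀ * (qesS α (qv ω) (ev ω) (v ω))⁻¹ := by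
          rw [← Matrix.mul_assoc, key]
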